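/- Inverse stability for balanced shallow ReLU networks: Let N = (d, m, D) and let N*_N be the set of bias-free two-layer parametrizations Γ = ((a_i^Γ)_i, (c_i^Γ)_i) such that (i) ‖c_i^Γ‖_∞ = ‖a_i^Γ‖_∞ for all i (balancedness), (ii) no two nonzero first-layer rows are positive multiples of each other (no redundant directions), and (iii) the last two coordinates of each a_i^Γ are strictly positive. Then for every Γ ∈ N*_N and every g ∈ R(N*_N) there exists Φ ∈ N*_N with R(Φ) = g and ‖Φ − Γ‖_∞ ≤ 4·|g − R(Γ)|_{W^{1,∞}}^{1/2}. -/

import Mathlib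

open MeasureTheory

/-- The `W^{1,∞}` seminorm of a vector-valued function: essential supremum of
the max-norm of the (a.e.) Jacobian. -/
noncomputable def vSobSemi (d D : ℕ) (f : (Fin d → ℝ) → Fin D → ℝ) : ℝ :=
  essSup (fun x : Fin d → ℝ =>
    ⨆ j : Fin D, ⨆ l : Fin d, |fderiv ℝ (fun y => f y j) x (Pi.single l 1)|) volume

namespace Stmt13

variable {d : ℕ}

noncomputable def dotCLM (a : Fin d → ℝ) : (Fin d → ℝ) →L[ℝ] ℝ :=
  ∑ l, a l • ContinuousLinearMap.proj l

lemma dotCLM_apply (a x : Fin d → ℝ) : dotCLM a x = ∑ l, a l * x l := by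
  simp [dotCLM, ContinuousLinearMap.sum_apply]

lemma dotCLM_single (a : Fin d → ℝ) (l : Fin d) : dotCLM a (Pi.single l 1) = a l := by
  rw [dotCLM_apply]
  rw [Finset.sum_eq_single l] <;> simp +contextual [Pi.single_apply]

lemma dot_self_pos {a : Fin d → ℝ} (ha : a ≠ 0) : 0 < ∑ l, a l * a l := by
  obtain ⟨l, hl⟩ := Function.ne_iff.1 ha
  exact Finset.sum_pos' (fun i _ => mul_self_nonneg _)
    ⟨l, Finset.mem_univ l, mul_self_pos.2 hl⟩

lemma cont_dot (a : Fin d → ℝ) : Continuous fun y : Fin d → ℝ => ∑ l, a l * y l := by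
  have := (dotCLM a).continuous
  convert this using 1
  funext y; rw [dotCLM_apply]

lemma hasFDerivAt_relu (a : Fin d → ℝ) (c : ℝ) (x : Fin d → ℝ) (hx : (∑ l, a l * x l) ≠ 0) :
    HasFDerivAt (fun y => c * max (∑ l, a l * y l) 0)
      ((if 0 < ∑ l, a l * x l then c else 0) • dotCLM a) x := by
  rcases hx.lt_or_gt with hneg | hpos
  · rw [if_neg (not_lt.2 hneg.le), zero_smul]
    refine (hasFDerivAt_const (0:ℝ) x).congr_of_eventuallyEq ?_
    have hev : ∀ᶠ y in nhds x, (∑ l, a l * y l) < 0 :=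
      Filter.eventually_of_mem ((isOpen_lt (cont_dot a) continuous_const).mem_nhds hneg) fun y hy => hy
    filter_upwards [hev] with y hy
    rw [max_eq_right hy.le, mul_zero]
  · rw [if_pos hpos]
    have hder : HasFDerivAt (fun y : Fin d → ℝ => c * dotCLM a y) (c • dotCLM a) x :=
      (dotCLM a).hasFDerivAt.const_mul c
    refine hder.congr_of_eventuallyEq ?_
    have hev : ∀ᶠ y in nhds x, 0 < (∑ l, a l * y l) :=
      Filter.eventually_of_mem ((isOpen_lt continuous_const (cont_dot a)).mem_nhds hpos) fun y hy => hy
    filter_upwards [hev] with y hy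
    rw [max_eq_left hy.le, dotCLM_apply]

variable {m D : ℕ}

lemma hasFDerivAt_net (a : Fin m → Fin d → ℝ) (c : Fin m → Fin D → ℝ) (j : Fin D)
    (x : Fin d → ℝ) (hx : ∀ i, (∑ l, a i l * x l) ≠ 0) :
    HasFDerivAt (fun y => ∑ i, c i j * max (∑ l, a i l * y l) 0)
      (∑ i, (if 0 < ∑ l, a i l * x l then c i j else 0) • dotCLM (a i)) x := by
  have := HasFDerivAt.fun_sum (fun i (_ : i ∈ Finset.univ) => hasFDerivAt_relu (a i) (c i j) x (hx i))
  exact this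

lemma fderiv_diff_apply (aΘ : Fin m → Fin d → ℝ) (cΘ : Fin m → Fin D → ℝ)
    (aΓ : Fin m → Fin d → ℝ) (cΓ : Fin m → Fin D → ℝ) (j : Fin D) (l : Fin d)
    (x : Fin d → ℝ) (hxΘ : ∀ i, (∑ l, aΘ i l * x l) ≠ 0) (hxΓ : ∀ i, (∑ l, aΓ i l * x l) ≠ 0) :
    fderiv ℝ (fun y => (∑ i, cΘ i j * max (∑ l, aΘ i l * y l) 0)
        - ∑ i, cΓ i j * max (∑ l, aΓ i l * y l) 0) x (Pi.single l 1)
      = (∑ i, (if 0 < ∑ l', aΘ i l' * x l' then cΘ i j else 0) * aΘ i l)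
        - ∑ i, (if 0 < ∑ l', aΓ i l' * x l' then cΓ i j else 0) * aΓ i l := by
  have h := ((hasFDerivAt_net aΘ cΘ j x hxΘ).fun_sub (hasFDerivAt_net aΓ cΓ j x hxΓ)).fderiv
  rw [h]
  simp only [ContinuousLinearMap.sub_apply, ContinuousLinearMap.sum_apply,
    ContinuousLinearMap.smul_apply, dotCLM_single, smul_eq_mul]

variable {d m D : ℕ}

lemma exists_generic {ι : Type*} [Fintype ι] (v : ι → Fin d → ℝ)
    (hv : ∀ k, v k ≠ 0) : ∃ y : Fin d → ℝ, ∀ k, (∑ l, v k l * y l) ≠ 0 := by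
  by_contra h
  push_neg at h
  have hcover : (Set.univ : Set (Fin d → ℝ)) ⊆
      ⋃ k, ((LinearMap.ker (dotCLM (v k)).toLinearMap : Submodule ℝ (Fin d → ℝ)) : Set (Fin d → ℝ)) := by
    intro y _
    obtain ⟨k, hk⟩ := h y
    exact Set.mem_iUnion.2 ⟨k, by simpa [LinearMap.mem_ker, dotCLM_apply] using hk⟩
  have hnull : volume (⋃ k, ((LinearMap.ker (dotCLM (v k)).toLinearMap : Submodule ℝ (Fin d → ℝ)) : Set (Fin d → ℝ))) = 0 := by
    refine measure_iUnion_null fun k => ?_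
    refine Measure.addHaar_submodule _ _ fun htop => ?_
    have hk : v k ∈ LinearMap.ker (dotCLM (v k)).toLinearMap := htop ▸ Submodule.mem_top
    rw [LinearMap.mem_ker, ContinuousLinearMap.coe_coe] at hk
    rw [dotCLM_apply] at hk
    exact (dot_self_pos (hv k)).ne' hk
  exact (IsOpen.measure_ne_zero volume isOpen_univ Set.univ_nonempty)
    (measure_mono_null hcover hnull)


lemma le_ciSup2 {ι κ : Type*} [Fintype ι] [Fintype κ] (g : ι → κ → ℝ) (j : ι) (l : κ) :
    g j l ≤ ⨆ j, ⨆ l, g j l :=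
  le_trans (le_ciSup (Set.Finite.bddAbove (Set.finite_range (g j))) l)
    (le_ciSup (Set.Finite.bddAbove (Set.finite_range fun j => ⨆ l, g j l)) j)

lemma term_bound {P : Fin m → Prop} [DecidablePred P] (a : Fin m → Fin d → ℝ)
    (c : Fin m → Fin D → ℝ) (j : Fin D) (l : Fin d) :
    |∑ i, (if P i then c i j else 0) * a i l| ≤ ∑ i, ‖c i‖ * ‖a i‖ := by
  refine (Finset.abs_sum_le_sum_abs _ _).trans (Finset.sum_le_sum fun i _ => ?_)
  rw [abs_mul]
  refine mul_le_mul ?_ ((Real.norm_eq_abs _) ▸ norm_le_pi_norm (a i) l)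
    (abs_nonneg _) (norm_nonneg _)
  split_ifs
  · exact (Real.norm_eq_abs _) ▸ norm_le_pi_norm (c i) j
  · rw [abs_zero]; exact norm_nonneg _

lemma ext_bound (hdpos : 0 < d) (hD : 0 < D)
    (aΘ : Fin m → Fin d → ℝ) (cΘ : Fin m → Fin D → ℝ)
    (aΓ : Fin m → Fin d → ℝ) (cΓ : Fin m → Fin D → ℝ)
    (hrΘ : ∀ i, aΘ i ≠ 0) (hrΓ : ∀ i, aΓ i ≠ 0)
    (x : Fin d → ℝ) (hxΘ : ∀ i, (∑ l, aΘ i l * x l) ≠ 0) (hxΓ : ∀ i, (∑ l, aΓ i l * x l) ≠ 0)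
    (j : Fin D) (l : Fin d) :
    |(∑ i, (if 0 < ∑ l', aΘ i l' * x l' then cΘ i j else 0) * aΘ i l)
      - ∑ i, (if 0 < ∑ l', aΓ i l' * x l' then cΓ i j else 0) * aΓ i l|
      ≤ vSobSemi d D (fun y j => (∑ i, cΘ i j * max (∑ l, aΘ i l * y l) 0)
          - ∑ i, cΓ i j * max (∑ l, aΓ i l * y l) 0) := by
  haveI : Nonempty (Fin d) := ⟨⟨0, hdpos⟩⟩
  haveI : Nonempty (Fin D) := ⟨⟨0, hD⟩⟩
  set F : (Fin d → ℝ) → ℝ := fun y =>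
    ⨆ j : Fin D, ⨆ l : Fin d, |fderiv ℝ (fun z => (∑ i, cΘ i j * max (∑ l, aΘ i l * z l) 0)
      - ∑ i, cΓ i j * max (∑ l, aΓ i l * z l) 0) y (Pi.single l 1)| with hF
  -- a.e. every point is "good"
  have hgood : ∀ᵐ y : Fin d → ℝ, (∀ i, (∑ l, aΘ i l * y l) ≠ 0) ∧
      (∀ i, (∑ l, aΓ i l * y l) ≠ 0) := by
    have h1 : ∀ᵐ y : Fin d → ℝ, ∀ i, (∑ l, aΘ i l * y l) ≠ 0 := by
      rw [MeasureTheory.ae_all_iff]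
      intro i
      rw [MeasureTheory.ae_iff]
      have : {y : Fin d → ℝ | ¬ (∑ l, aΘ i l * y l) ≠ 0} ⊆
          ((LinearMap.ker (dotCLM (aΘ i)).toLinearMap : Submodule ℝ (Fin d → ℝ)) : Set (Fin d → ℝ)) := by
        intro y hy
        simp only [Set.mem_setOf_eq, not_not] at hy
        simpa [LinearMap.mem_ker, dotCLM_apply] using hy
      refine measure_mono_null this (Measure.addHaar_submodule _ _ fun htop => ?_)
      have hk : aΘ i ∈ LinearMap.ker (dotCLM (aΘ i)).toLinearMap := htop ▸ Submodule.mem_top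
      rw [LinearMap.mem_ker, ContinuousLinearMap.coe_coe, dotCLM_apply] at hk
      exact (dot_self_pos (hrΘ i)).ne' hk
    have h2 : ∀ᵐ y : Fin d → ℝ, ∀ i, (∑ l, aΓ i l * y l) ≠ 0 := by
      rw [MeasureTheory.ae_all_iff]
      intro i
      rw [MeasureTheory.ae_iff]
      have : {y : Fin d → ℝ | ¬ (∑ l, aΓ i l * y l) ≠ 0} ⊆
          ((LinearMap.ker (dotCLM (aΓ i)).toLinearMap : Submodule ℝ (Fin d → ℝ)) : Set (Fin d → ℝ)) := by
        intro y hy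
        simp only [Set.mem_setOf_eq, not_not] at hy
        simpa [LinearMap.mem_ker, dotCLM_apply] using hy
      refine measure_mono_null this (Measure.addHaar_submodule _ _ fun htop => ?_)
      have hk : aΓ i ∈ LinearMap.ker (dotCLM (aΓ i)).toLinearMap := htop ▸ Submodule.mem_top
      rw [LinearMap.mem_ker, ContinuousLinearMap.coe_coe, dotCLM_apply] at hk
      exact (dot_self_pos (hrΓ i)).ne' hk
    exact h1.and h2
  -- bound of F on good points
  set K : ℝ := (∑ i, ‖cΘ i‖ * ‖aΘ i‖) + ∑ i, ‖cΓ i‖ * ‖aΓ i‖ with hK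
  have hFbound : ∀ y : Fin d → ℝ, (∀ i, (∑ l, aΘ i l * y l) ≠ 0) →
      (∀ i, (∑ l, aΓ i l * y l) ≠ 0) → F y ≤ K := by
    intro y hyΘ hyΓ
    simp only [hF, hK]
    refine ciSup_le fun j' => ciSup_le fun l' => ?_
    rw [fderiv_diff_apply aΘ cΘ aΓ cΓ j' l' y hyΘ hyΓ]
    exact (abs_sub _ _).trans (add_le_add (term_bound aΘ cΘ j' l') (term_bound aΓ cΓ j' l'))
  have hbdd : Filter.IsBoundedUnder (· ≤ ·) (ae (volume : Measure (Fin d → ℝ))) F := by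
    refine ⟨K, ?_⟩
    rw [Filter.eventually_map]
    filter_upwards [hgood] with y hy
    exact hFbound y hy.1 hy.2
  have hae : ∀ᵐ y : Fin d → ℝ, F y ≤ essSup F volume := ae_le_essSup hbdd
  -- the open cell around x
  set U : Set (Fin d → ℝ) := (⋂ i, {y | 0 < (∑ l', aΘ i l' * x l') * (∑ l', aΘ i l' * y l')})
      ∩ ⋂ i, {y | 0 < (∑ l', aΓ i l' * x l') * (∑ l', aΓ i l' * y l')} with hU
  have hUopen : IsOpen U := by
    refine IsOpen.inter (isOpen_iInter_of_finite fun i => ?_)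
      (isOpen_iInter_of_finite fun i => ?_)
    · exact isOpen_lt continuous_const (continuous_const.mul (cont_dot (aΘ i)))
    · exact isOpen_lt continuous_const (continuous_const.mul (cont_dot (aΓ i)))
  have hxU : x ∈ U := by
    constructor
    · exact Set.mem_iInter.2 fun i => mul_self_pos.2 (hxΘ i)
    · exact Set.mem_iInter.2 fun i => mul_self_pos.2 (hxΓ i)
  have hUpos : 0 < volume U := hUopen.measure_pos volume ⟨x, hxU⟩
  -- pick a point z in U where F z is below the essSup
  obtain ⟨z, hzU, hzF⟩ : ∃ z ∈ U, F z ≤ essSup F volume := by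
    by_contra hno
    push_neg at hno
    have hsub : U ⊆ {y | ¬ F y ≤ essSup F volume} := fun y hy => not_le.2 (hno y hy)
    have h0 : volume {y | ¬ F y ≤ essSup F volume} = 0 := MeasureTheory.ae_iff.1 hae
    exact hUpos.ne' (measure_mono_null hsub h0)
  -- sign data at z agrees with that at x
  have hzΘ : ∀ i, (0 < (∑ l', aΘ i l' * z l') ↔ 0 < (∑ l', aΘ i l' * x l')) ∧
      (∑ l', aΘ i l' * z l') ≠ 0 := by
    intro i
    have hz := Set.mem_iInter.1 hzU.1 i
    simp only [Set.mem_setOf_eq] at hz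
    rcases mul_pos_iff.1 hz with ⟨h1, h2⟩ | ⟨h1, h2⟩
    · exact ⟨⟨fun _ => h1, fun _ => h2⟩, h2.ne'⟩
    · exact ⟨⟨fun h => absurd h (not_lt.2 h2.le), fun h => absurd h (not_lt.2 h1.le)⟩, h2.ne⟩
  have hzΓ : ∀ i, (0 < (∑ l', aΓ i l' * z l') ↔ 0 < (∑ l', aΓ i l' * x l')) ∧
      (∑ l', aΓ i l' * z l') ≠ 0 := by
    intro i
    have hz := Set.mem_iInter.1 hzU.2 i
    simp only [Set.mem_setOf_eq] at hz
    rcases mul_pos_iff.1 hz with ⟨h1, h2⟩ | ⟨h1, h2⟩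
    · exact ⟨⟨fun _ => h1, fun _ => h2⟩, h2.ne'⟩
    · exact ⟨⟨fun h => absurd h (not_lt.2 h2.le), fun h => absurd h (not_lt.2 h1.le)⟩, h2.ne⟩
  -- conclude
  have hval : fderiv ℝ (fun y => (∑ i, cΘ i j * max (∑ l, aΘ i l * y l) 0)
        - ∑ i, cΓ i j * max (∑ l, aΓ i l * y l) 0) z (Pi.single l 1)
      = (∑ i, (if 0 < ∑ l', aΘ i l' * x l' then cΘ i j else 0) * aΘ i l)
        - ∑ i, (if 0 < ∑ l', aΓ i l' * x l' then cΓ i j else 0) * aΓ i l := by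
    rw [fderiv_diff_apply aΘ cΘ aΓ cΓ j l z (fun i => (hzΘ i).2) (fun i => (hzΓ i).2)]
    congr 1
    · exact Finset.sum_congr rfl fun i _ => by rw [if_congr ((hzΘ i).1) rfl rfl]
    · exact Finset.sum_congr rfl fun i _ => by rw [if_congr ((hzΓ i).1) rfl rfl]
  calc |(∑ i, (if 0 < ∑ l', aΘ i l' * x l' then cΘ i j else 0) * aΘ i l)
        - ∑ i, (if 0 < ∑ l', aΓ i l' * x l' then cΓ i j else 0) * aΓ i l|
      = |fderiv ℝ (fun y => (∑ i, cΘ i j * max (∑ l, aΘ i l * y l) 0)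
          - ∑ i, cΓ i j * max (∑ l, aΓ i l * y l) 0) z (Pi.single l 1)| := by rw [hval]
    _ ≤ F z := by
        have h2 := le_ciSup2 (fun (j : Fin D) (l : Fin d) =>
          |fderiv ℝ (fun y => (∑ i, cΘ i j * max (∑ l, aΘ i l * y l) 0)
            - ∑ i, cΓ i j * max (∑ l, aΓ i l * y l) 0) z (Pi.single l 1)|) j l
        simpa only [hF] using h2
    _ ≤ essSup F volume := hzF
    _ = vSobSemi d D _ := by simp only [hF]; rfl


lemma dot_comm (a b : Fin d → ℝ) : ∑ l, a l * b l = ∑ l, b l * a l :=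
  Finset.sum_congr rfl fun l _ => mul_comm _ _

lemma dot_add_smul (b x a : Fin d → ℝ) (t : ℝ) :
    ∑ l, b l * (x + t • a) l = (∑ l, b l * x l) + t * ∑ l, b l * a l := by
  simp only [Pi.add_apply, Pi.smul_apply, smul_eq_mul, mul_add, Finset.sum_add_distrib]
  congr 1
  rw [Finset.mul_sum]
  exact Finset.sum_congr rfl fun l _ => by ring

lemma dot_smul_left (μ : ℝ) (a y : Fin d → ℝ) :
    ∑ l, (μ • a) l * y l = μ * ∑ l, a l * y l := by
  rw [Finset.mul_sum]
  exact Finset.sum_congr rfl fun l _ => by simp [mul_assoc]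

lemma dot_sub (b x y : Fin d → ℝ) :
    ∑ l, b l * (x - y) l = (∑ l, b l * x l) - ∑ l, b l * y l := by
  simp only [Pi.sub_apply, mul_sub, Finset.sum_sub_distrib]




lemma dot_smul_right (c : ℝ) (b a : Fin d → ℝ) :
    ∑ l, b l * (c • a) l = c * ∑ l, b l * a l := by
  rw [Finset.mul_sum]
  exact Finset.sum_congr rfl fun l _ => by simp [Pi.smul_apply]; ring

open scoped Classical in
lemma jump_bound (hdpos : 0 < d) (hD : 0 < D)
    (aΘ : Fin m → Fin d → ℝ) (cΘ : Fin m → Fin D → ℝ)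
    (aΓ : Fin m → Fin d → ℝ) (cΓ : Fin m → Fin D → ℝ)
    (hrΘ : ∀ i, aΘ i ≠ 0) (hrΓ : ∀ i, aΓ i ≠ 0)
    (a : Fin d → ℝ) (ha : a ≠ 0)
    (hsΘ : ∀ i (lam : ℝ), aΘ i = lam • a → 0 < lam)
    (hsΓ : ∀ i (lam : ℝ), aΓ i = lam • a → 0 < lam)
    (j : Fin D) (l : Fin d) :
    |(∑ i, if ∃ μ : ℝ, aΘ i = μ • a then cΘ i j * aΘ i l else 0)
      - ∑ i, if ∃ μ : ℝ, aΓ i = μ • a then cΓ i j * aΓ i l else 0|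
      ≤ 2 * vSobSemi d D (fun y j => (∑ i, cΘ i j * max (∑ l, aΘ i l * y l) 0)
          - ∑ i, cΓ i j * max (∑ l, aΓ i l * y l) 0) := by
  have haa : 0 < ∑ l', a l' * a l' := dot_self_pos ha
  set P : (Fin d → ℝ) → (Fin d → ℝ) :=
    fun b => b - ((∑ l', a l' * b l') / (∑ l', a l' * a l')) • a with hP
  have hPne : ∀ b : Fin d → ℝ, (¬∃ μ : ℝ, b = μ • a) → P b ≠ 0 := by
    intro b hb h0
    rw [hP] at h0
    have : b = ((∑ l', a l' * b l') / (∑ l', a l' * a l')) • a := by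
      have := sub_eq_zero.1 h0
      exact this
    exact hb ⟨_, this⟩
  -- generic point
  set v : Fin m ⊕ Fin m → (Fin d → ℝ) := fun k =>
    Sum.rec (fun i => if ∃ μ : ℝ, aΘ i = μ • a then a else P (aΘ i))
      (fun i => if ∃ μ : ℝ, aΓ i = μ • a then a else P (aΓ i)) k with hv
  have hvne : ∀ k, v k ≠ 0 := by
    rintro (i | i)
    · simp only [hv]
      split_ifs with h
      · exact ha
      · exact hPne _ h
    · simp only [hv]
      split_ifs with h
      · exact ha
      · exact hPne _ h
  obtain ⟨y, hy⟩ := exists_generic v hvne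
  set xs : Fin d → ℝ := y - ((∑ l', a l' * y l') / (∑ l', a l' * a l')) • a with hxs
  have hxsa : ∑ l', a l' * xs l' = 0 := by
    rw [hxs, dot_sub, dot_smul_right]
    rw [div_mul_cancel₀ _ haa.ne', sub_self]
  -- for non-parallel rows, the dot product at xs is nonzero
  have hkey : ∀ b : Fin d → ℝ, ∑ l', b l' * xs l' = ∑ l', (P b) l' * y l' := by
    intro b
    rw [hxs, dot_sub, dot_smul_right, hP]
    have : ∀ l', (b - ((∑ l', a l' * b l') / (∑ l', a l' * a l')) • a) l' * y l'
        = b l' * y l' - ((∑ l', a l' * b l') / (∑ l', a l' * a l')) * (a l' * y l') := by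
      intro l'; simp [Pi.sub_apply, Pi.smul_apply]; ring
    rw [Finset.sum_congr rfl fun l' _ => this l', Finset.sum_sub_distrib, ← Finset.mul_sum,
      dot_comm b a]
    ring
  have hxsΘ : ∀ i, (¬∃ μ : ℝ, aΘ i = μ • a) → (∑ l', aΘ i l' * xs l') ≠ 0 := by
    intro i hi
    rw [hkey]
    have := hy (Sum.inl i)
    simpa only [hv, if_neg hi] using this
  have hxsΓ : ∀ i, (¬∃ μ : ℝ, aΓ i = μ • a) → (∑ l', aΓ i l' * xs l') ≠ 0 := by
    intro i hi
    rw [hkey]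
    have := hy (Sum.inr i)
    simpa only [hv, if_neg hi] using this
  -- choose a small positive t
  have hev : ∀ᶠ t : ℝ in nhdsWithin 0 (Set.Ioi 0),
      (∀ i, (¬∃ μ : ℝ, aΘ i = μ • a) →
        |t * (∑ l', aΘ i l' * a l')| < |∑ l', aΘ i l' * xs l'|) ∧
      (∀ i, (¬∃ μ : ℝ, aΓ i = μ • a) →
        |t * (∑ l', aΓ i l' * a l')| < |∑ l', aΓ i l' * xs l'|) := by
    have horig : ∀ (C r : ℝ), 0 < r → ∀ᶠ t : ℝ in nhdsWithin 0 (Set.Ioi 0), |t * C| < r := by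
      intro C r hr
      have htend : Filter.Tendsto (fun t : ℝ => |t * C|) (nhdsWithin 0 (Set.Ioi 0)) (nhds 0) := by
        have : Filter.Tendsto (fun t : ℝ => |t * C|) (nhds 0) (nhds |0 * C|) :=
          ((continuous_id.mul continuous_const).abs).tendsto 0
        simpa using this.mono_left nhdsWithin_le_nhds
      exact htend.eventually_lt_const hr
    refine Filter.Eventually.and (Filter.eventually_all.2 fun i => ?_)
      (Filter.eventually_all.2 fun i => ?_)
    · by_cases hi : ∃ μ : ℝ, aΘ i = μ • a
      · filter_upwards with t ht; exact absurd hi ht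
      · filter_upwards [horig (∑ l', aΘ i l' * a l') _ (abs_pos.2 (hxsΘ i hi))] with t ht _
        exact ht
    · by_cases hi : ∃ μ : ℝ, aΓ i = μ • a
      · filter_upwards with t ht; exact absurd hi ht
      · filter_upwards [horig (∑ l', aΓ i l' * a l') _ (abs_pos.2 (hxsΓ i hi))] with t ht _
        exact ht
  obtain ⟨t, ⟨htΘ, htΓ⟩, htpos⟩ := (hev.and self_mem_nhdsWithin).exists
  set xp : Fin d → ℝ := xs + t • a with hxp
  set xm : Fin d → ℝ := xs + (-t) • a with hxm
  -- behaviour of each row at xp and xm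
  have main : ∀ b : Fin d → ℝ, (∀ lam : ℝ, b = lam • a → 0 < lam) →
      ((¬∃ μ : ℝ, b = μ • a) → |t * (∑ l', b l' * a l')| < |∑ l', b l' * xs l'|) →
      (((∑ l', b l' * xp l') ≠ 0 ∧ (∑ l', b l' * xm l') ≠ 0) ∧
       (((∃ μ : ℝ, b = μ • a) →
          (0 < ∑ l', b l' * xp l') ∧ ¬(0 < ∑ l', b l' * xm l')) ∧
        ((¬∃ μ : ℝ, b = μ • a) →
          ((0 < ∑ l', b l' * xp l') ↔ (0 < ∑ l', b l' * xm l'))))) := by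
    intro b hsign hsmall
    by_cases hpar : ∃ μ : ℝ, b = μ • a
    · obtain ⟨μ, hμ⟩ := hpar
      have hμpos : 0 < μ := hsign μ hμ
      have hp : ∑ l', b l' * xp l' = μ * (t * (∑ l', a l' * a l')) := by
        rw [hxp, hμ, dot_smul_left, dot_add_smul, hxsa, zero_add]
      have hm : ∑ l', b l' * xm l' = μ * (-t * (∑ l', a l' * a l')) := by
        rw [hxm, hμ, dot_smul_left, dot_add_smul, hxsa, zero_add]
      have hppos : 0 < ∑ l', b l' * xp l' := by
        rw [hp]; positivity
      have hmneg : ∑ l', b l' * xm l' < 0 := by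
        rw [hm]
        have : 0 < μ * (t * (∑ l', a l' * a l')) := by positivity
        nlinarith
      exact ⟨⟨hppos.ne', hmneg.ne⟩, ⟨fun _ => ⟨hppos, not_lt.2 hmneg.le⟩,
        fun h => absurd ⟨μ, hμ⟩ h⟩⟩
    · have hsm := hsmall hpar
      have hp : ∑ l', b l' * xp l' = (∑ l', b l' * xs l') + t * (∑ l', b l' * a l') :=
        by rw [hxp, dot_add_smul]
      have hm : ∑ l', b l' * xm l' = (∑ l', b l' * xs l') - t * (∑ l', b l' * a l') := by
        rw [hxm, dot_add_smul]; ring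
      have habs := abs_lt.1 hsm
      rcases lt_trichotomy (∑ l', b l' * xs l') 0 with hneg | hzero | hpos
      · have h1 : ∑ l', b l' * xp l' < 0 := by
          rw [hp]; rw [abs_of_neg hneg] at habs; linarith [habs.2]
        have h2 : ∑ l', b l' * xm l' < 0 := by
          rw [hm]; rw [abs_of_neg hneg] at habs; linarith [habs.1]
        exact ⟨⟨h1.ne, h2.ne⟩, ⟨fun h => absurd h hpar,
          fun _ => ⟨fun h => absurd h (not_lt.2 h1.le), fun h => absurd h (not_lt.2 h2.le)⟩⟩⟩
      · rw [hzero, abs_zero] at hsm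
        exact absurd hsm (not_lt.2 (abs_nonneg _))
      · have h1 : 0 < ∑ l', b l' * xp l' := by
          rw [hp]; rw [abs_of_pos hpos] at habs; linarith [habs.1]
        have h2 : 0 < ∑ l', b l' * xm l' := by
          rw [hm]; rw [abs_of_pos hpos] at habs; linarith [habs.2]
        exact ⟨⟨h1.ne', h2.ne'⟩, ⟨fun h => absurd h hpar, fun _ => ⟨fun _ => h2, fun _ => h1⟩⟩⟩
  have mΘ := fun i => main (aΘ i) (hsΘ i) (htΘ i)
  have mΓ := fun i => main (aΓ i) (hsΓ i) (htΓ i)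
  have EP := ext_bound hdpos hD aΘ cΘ aΓ cΓ hrΘ hrΓ xp
    (fun i => (mΘ i).1.1) (fun i => (mΓ i).1.1) j l
  have EM := ext_bound hdpos hD aΘ cΘ aΓ cΓ hrΘ hrΓ xm
    (fun i => (mΘ i).1.2) (fun i => (mΓ i).1.2) j l
  -- the jump equals the difference of the two cell derivatives
  have hsumΘ : (∑ i, if ∃ μ : ℝ, aΘ i = μ • a then cΘ i j * aΘ i l else 0)
      = (∑ i, (if 0 < ∑ l', aΘ i l' * xp l' then cΘ i j else 0) * aΘ i l)
        - ∑ i, (if 0 < ∑ l', aΘ i l' * xm l' then cΘ i j else 0) * aΘ i l := by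
    rw [← Finset.sum_sub_distrib]
    refine Finset.sum_congr rfl fun i _ => ?_
    by_cases hpar : ∃ μ : ℝ, aΘ i = μ • a
    · obtain ⟨h1, h2⟩ := (mΘ i).2.1 hpar
      rw [if_pos hpar, if_pos h1, if_neg h2, zero_mul, sub_zero]
    · have hiff := (mΘ i).2.2 hpar
      rw [if_neg hpar, if_congr hiff rfl rfl, sub_self]
  have hsumΓ : (∑ i, if ∃ μ : ℝ, aΓ i = μ • a then cΓ i j * aΓ i l else 0)
      = (∑ i, (if 0 < ∑ l', aΓ i l' * xp l' then cΓ i j else 0) * aΓ i l)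
        - ∑ i, (if 0 < ∑ l', aΓ i l' * xm l' then cΓ i j else 0) * aΓ i l := by
    rw [← Finset.sum_sub_distrib]
    refine Finset.sum_congr rfl fun i _ => ?_
    by_cases hpar : ∃ μ : ℝ, aΓ i = μ • a
    · obtain ⟨h1, h2⟩ := (mΓ i).2.1 hpar
      rw [if_pos hpar, if_pos h1, if_neg h2, zero_mul, sub_zero]
    · have hiff := (mΓ i).2.2 hpar
      rw [if_neg hpar, if_congr hiff rfl rfl, sub_self]
  rw [hsumΘ, hsumΓ]
  have harr : ∀ A B C E : ℝ, (A - B) - (C - E) = (A - C) - (B - E) := by intros; ring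
  rw [harr]
  refine (abs_sub _ _).trans ?_
  rw [two_mul]
  exact add_le_add EP EM


lemma exists_norm_eq {n : ℕ} (hn : 0 < n) (w : Fin n → ℝ) : ∃ k, ‖w‖ = |w k| := by
  haveI : Nonempty (Fin n) := ⟨⟨0, hn⟩⟩
  obtain ⟨k, -, hk⟩ := Finset.exists_mem_eq_sup (Finset.univ : Finset (Fin n))
    Finset.univ_nonempty (fun b => ‖w b‖₊)
  exact ⟨k, by rw [Pi.norm_def, hk]; exact (Real.norm_eq_abs _)⟩

lemma abs_le_pi_norm {n : ℕ} (w : Fin n → ℝ) (k : Fin n) : |w k| ≤ ‖w‖ :=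
  (Real.norm_eq_abs _) ▸ norm_le_pi_norm w k

lemma alg {dd DD : ℕ} (hd : 0 < dd) (hD : 0 < DD) (a a' : Fin dd → ℝ) (c c' : Fin DD → ℝ)
    (hbal : ‖c‖ = ‖a‖) (hbal' : ‖c'‖ = ‖a'‖) (μ : ℝ) (hμ : 0 < μ) (hpar : a = μ • a')
    (δ : ℝ) (h : ∀ j l, |c j * a l - c' j * a' l| ≤ δ) :
    (∀ l, |a l - a' l| ≤ Real.sqrt δ) ∧
      (∀ j, |c j - c' j| ≤ Real.sqrt (2 * δ) + Real.sqrt δ) := by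
  have hδ : 0 ≤ δ := le_trans (abs_nonneg _) (h ⟨0, hD⟩ ⟨0, hd⟩)
  set p : ℝ := ‖a‖ with hp
  set q : ℝ := ‖a'‖ with hq
  have hp0 : 0 ≤ p := norm_nonneg _
  have hq0 : 0 ≤ q := norm_nonneg _
  have hpq : p = μ * q := by rw [hp, hq, hpar, norm_smul, Real.norm_eq_abs, abs_of_pos hμ]
  -- p^2 ≤ q^2 + δ and q^2 ≤ p^2 + δ
  obtain ⟨jc, hjc⟩ := exists_norm_eq hD c
  obtain ⟨la, hla⟩ := exists_norm_eq hd a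
  obtain ⟨jc', hjc'⟩ := exists_norm_eq hD c'
  obtain ⟨la', hla'⟩ := exists_norm_eq hd a'
  have hsq1 : p * p ≤ q * q + δ := by
    have h1 : |c jc * a la| ≤ |c' jc * a' la| + δ := by
      have := h jc la
      have h2 := abs_sub_abs_le_abs_sub (c jc * a la) (c' jc * a' la)
      linarith
    have h3 : |c' jc * a' la| ≤ q * q := by
      rw [abs_mul]
      exact mul_le_mul ((hbal' ▸ abs_le_pi_norm c' jc)) (abs_le_pi_norm a' la)
        (abs_nonneg _) hq0
    have h4 : |c jc * a la| = p * p := by rw [abs_mul, ← hjc, ← hla, hbal]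
    linarith
  have hsq2 : q * q ≤ p * p + δ := by
    have h1 : |c' jc' * a' la'| ≤ |c jc' * a la'| + δ := by
      have := h jc' la'
      have h2 := abs_sub_abs_le_abs_sub (c' jc' * a' la') (c jc' * a la')
      rw [abs_sub_comm] at h2
      linarith
    have h3 : |c jc' * a la'| ≤ p * p := by
      rw [abs_mul]
      exact mul_le_mul ((hbal ▸ abs_le_pi_norm c jc')) (abs_le_pi_norm a la')
        (abs_nonneg _) hp0
    have h4 : |c' jc' * a' la'| = q * q := by rw [abs_mul, ← hjc', ← hla', hbal']
    linarith
  have hpmq : |p - q| ≤ Real.sqrt δ := by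
    have h1 : (p - q) ^ 2 ≤ δ := by nlinarith [abs_nonneg (p - q)]
    calc |p - q| = Real.sqrt ((p - q) ^ 2) := (Real.sqrt_sq_eq_abs _).symm
      _ ≤ Real.sqrt δ := Real.sqrt_le_sqrt h1
  constructor
  · intro l
    have h1 : |a l - a' l| = |μ - 1| * |a' l| := by
      rw [hpar]; rw [← abs_mul]; congr 1; simp [Pi.smul_apply]; ring
    have h2 : |μ - 1| * |a' l| ≤ |μ - 1| * q := by
      exact mul_le_mul_of_nonneg_left (abs_le_pi_norm a' l) (abs_nonneg _)
    have h3 : |μ - 1| * q = |p - q| := by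
      have h5 : |p - q| = |(μ - 1) * q| := by congr 1; rw [hpq]; ring
      rw [h5, abs_mul, abs_of_nonneg hq0]
    rw [h1]
    exact le_trans h2 (h3 ▸ hpmq)
  · intro j
    have hsd : Real.sqrt δ ≤ Real.sqrt (2 * δ) := Real.sqrt_le_sqrt (by linarith)
    by_cases hcase : q ≤ Real.sqrt δ
    · -- both norms small
      have hq2 : q * q ≤ δ := by
        nlinarith [Real.sq_sqrt hδ, Real.sqrt_nonneg δ]
      have hpbound : p ≤ Real.sqrt (2 * δ) := by
        refine Real.le_sqrt_of_sq_le ?_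
        nlinarith
      calc |c j - c' j| ≤ |c j| + |c' j| := abs_sub _ _
        _ ≤ p + q := add_le_add (hbal ▸ abs_le_pi_norm c j) (hbal' ▸ abs_le_pi_norm c' j)
        _ ≤ Real.sqrt (2 * δ) + Real.sqrt δ := add_le_add hpbound hcase
    · push_neg at hcase
      have hqpos : 0 < q := lt_of_le_of_lt (Real.sqrt_nonneg δ) hcase
      have hδq : δ / q ≤ Real.sqrt δ := by
        rw [div_le_iff₀ hqpos]
        nlinarith [Real.sq_sqrt hδ, Real.sqrt_nonneg δ]
      have key1 : |μ * c j - c' j| * q ≤ δ := by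
        have := h j la'
        have he : |c j * a la' - c' j * a' la'| = |μ * c j - c' j| * |a' la'| := by
          rw [hpar, ← abs_mul]
          congr 1
          simp [Pi.smul_apply]; ring
        rw [he, ← hla'] at this
        exact this
      rcases le_or_gt p q with hple | hqlt
      · -- p ≤ q
        have h1 : |μ * c j - c' j| ≤ δ / q := by
          rw [le_div_iff₀ hqpos]; exact key1
        have h2 : |c j - μ * c j| ≤ Real.sqrt δ := by
          have he : |c j - μ * c j| = |1 - μ| * |c j| := by rw [← abs_mul]; congr 1; ring
          have hcp : |c j| ≤ p := hbal ▸ abs_le_pi_norm c j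
          have h3 : |1 - μ| * |c j| ≤ |1 - μ| * q := by
            refine mul_le_mul_of_nonneg_left (le_trans hcp hple) (abs_nonneg _)
          have h4 : |1 - μ| * q = |q - p| := by
            have h5 : |q - p| = |(1 - μ) * q| := by congr 1; rw [hpq]; ring
            rw [h5, abs_mul, abs_of_nonneg hq0]
          rw [he]
          rw [abs_sub_comm] at hpmq
          exact le_trans h3 (h4 ▸ hpmq)
        calc |c j - c' j| = |(c j - μ * c j) + (μ * c j - c' j)| := by
              rw [sub_add_sub_cancel]
          _ ≤ |c j - μ * c j| + |μ * c j - c' j| := abs_add_le _ _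
          _ ≤ Real.sqrt δ + δ / q := add_le_add h2 h1
          _ ≤ Real.sqrt (2 * δ) + Real.sqrt δ := add_le_add hsd hδq
      · -- q < p
        have hppos : 0 < p := lt_trans hqpos hqlt
        have hμval : μ = p / q := by
          rw [hpq, mul_div_assoc, div_self hqpos.ne', mul_one]
        have key2 : |c j - c' j / μ| * p ≤ δ := by
          have hmune : μ ≠ 0 := hμ.ne'
          have ha' : a' la = a la / μ := by
            have h6 : a la = μ * a' la := by rw [hpar]; simp [Pi.smul_apply]
            rw [h6, mul_comm, mul_div_assoc, div_self hmune, mul_one]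
          have he : |c j * a la - c' j * a' la| = |c j - c' j / μ| * |a la| := by
            rw [ha', ← abs_mul]
            congr 1
            ring
          have := h j la
          rw [he, ← hla] at this
          exact this
        have h1 : |c j - c' j / μ| ≤ δ / p := by
          rw [le_div_iff₀ hppos]; exact key2
        have hδp : δ / p ≤ Real.sqrt δ := by
          rw [div_le_iff₀ hppos]
          nlinarith [Real.sq_sqrt hδ, Real.sqrt_nonneg δ]
        have h2 : |c' j / μ - c' j| ≤ Real.sqrt δ := by
          have he : |c' j / μ - c' j| = |1/μ - 1| * |c' j| := by
            rw [← abs_mul]; congr 1; ring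
          have e1 : |1/μ - 1| = |q - p| / p := by
            have h7 : 1/μ - 1 = (q - p)/p := by
              rw [hμval]
              rw [one_div, inv_div]
              field_simp
            rw [h7, abs_div, abs_of_pos hppos]
          have h3 : |1/μ - 1| * |c' j| ≤ |1/μ - 1| * q :=
            mul_le_mul_of_nonneg_left (hbal' ▸ abs_le_pi_norm c' j) (abs_nonneg _)
          have h4 : |1/μ - 1| * q ≤ |q - p| := by
            rw [e1, div_mul_eq_mul_div, div_le_iff₀ hppos]
            exact mul_le_mul_of_nonneg_left hqlt.le (abs_nonneg _)
          rw [he]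
          rw [abs_sub_comm] at hpmq
          exact le_trans h3 (le_trans h4 hpmq)
        calc |c j - c' j| = |(c j - c' j / μ) + (c' j / μ - c' j)| := by
              rw [sub_add_sub_cancel]
          _ ≤ |c j - c' j / μ| + |c' j / μ - c' j| := abs_add_le _ _
          _ ≤ δ / p + Real.sqrt δ := add_le_add h1 h2
          _ ≤ Real.sqrt (2 * δ) + Real.sqrt δ := add_le_add (le_trans hδp hsd) le_rfl



lemma small_norm {n k : ℕ} (hn : 0 < n) (hk : 0 < k) (a : Fin n → ℝ) (c : Fin k → ℝ)
    (hbal : ‖c‖ = ‖a‖) (δ : ℝ) (h : ∀ j l, |c j * a l| ≤ δ) : ‖a‖ ≤ Real.sqrt δ := by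
  obtain ⟨j0, hj0⟩ := exists_norm_eq hk c
  obtain ⟨l0, hl0⟩ := exists_norm_eq hn a
  refine Real.le_sqrt_of_sq_le ?_
  have h1 := h j0 l0
  rw [abs_mul, ← hj0, ← hl0, hbal] at h1
  rw [sq]
  exact h1

end Stmt13

open Stmt13

/-- Inverse stability on the restricted parametrization space `𝒩*_N`
(balanced, no redundant directions, last two coordinates of each first-layer
row strictly positive): for every `Γ ∈ 𝒩*_N` and every realization `g` of some
`Θ ∈ 𝒩*_N` there is a parametrization `Φ ∈ 𝒩*_N` of `g` with
`‖Φ − Γ‖_∞ ≤ 4·|g − R(Γ)|_{W^{1,∞}}^{1/2}`. -/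
theorem stmt_13 {d m D : ℕ} (hd : 2 ≤ d)
    (aΓ : Fin m → Fin d → ℝ) (cΓ : Fin m → Fin D → ℝ)
    (aΘ : Fin m → Fin d → ℝ) (cΘ : Fin m → Fin D → ℝ)
    (hΓbal : ∀ i, ‖cΓ i‖ = ‖aΓ i‖)
    (hΓred : ∀ i j, i ≠ j → aΓ i ≠ 0 → aΓ j ≠ 0 → ∀ μ : ℝ, 0 < μ → aΓ i ≠ μ • aΓ j)
    (hΓpos : ∀ i, 0 < aΓ i ⟨d - 1, by omega⟩ ∧ 0 < aΓ i ⟨d - 2, by omega⟩)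
    (hΘbal : ∀ i, ‖cΘ i‖ = ‖aΘ i‖)
    (hΘred : ∀ i j, i ≠ j → aΘ i ≠ 0 → aΘ j ≠ 0 → ∀ μ : ℝ, 0 < μ → aΘ i ≠ μ • aΘ j)
    (hΘpos : ∀ i, 0 < aΘ i ⟨d - 1, by omega⟩ ∧ 0 < aΘ i ⟨d - 2, by omega⟩) :
    ∃ (aΦ : Fin m → Fin d → ℝ) (cΦ : Fin m → Fin D → ℝ),
      (∀ i, ‖cΦ i‖ = ‖aΦ i‖) ∧
      (∀ i j, i ≠ j → aΦ i ≠ 0 → aΦ j ≠ 0 → ∀ μ : ℝ, 0 < μ → aΦ i ≠ μ • aΦ j) ∧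
      (∀ i, 0 < aΦ i ⟨d - 1, by omega⟩ ∧ 0 < aΦ i ⟨d - 2, by omega⟩) ∧
      (∀ x : Fin d → ℝ, ∀ j : Fin D,
        ∑ i, cΦ i j * max (∑ l, aΦ i l * x l) 0 =
          ∑ i, cΘ i j * max (∑ l, aΘ i l * x l) 0) ∧
      max (⨆ i, ⨆ l, |aΦ i l - aΓ i l|) (⨆ i, ⨆ j, |cΦ i j - cΓ i j|) ≤
        4 * Real.sqrt (vSobSemi d D (fun x j =>
          (∑ i, cΘ i j * max (∑ l, aΘ i l * x l) 0) -
            ∑ i, cΓ i j * max (∑ l, aΓ i l * x l) 0)) := by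
  classical
  rcases Nat.eq_zero_or_pos m with hm | hm
  · subst hm
    refine ⟨aΘ, cΘ, hΘbal, hΘred, hΘpos, fun x j => rfl, ?_⟩
    rw [show (⨆ i : Fin 0, ⨆ l, |aΘ i l - aΓ i l|) = 0 from Real.iSup_of_isEmpty _,
        show (⨆ i : Fin 0, ⨆ j, |cΘ i j - cΓ i j|) = 0 from Real.iSup_of_isEmpty _]
    simp only [max_self]
    positivity
  · have hd0 : 0 < d := by omega
    haveI hne_d : Nonempty (Fin d) := ⟨⟨0, hd0⟩⟩
    haveI hne_m : Nonempty (Fin m) := ⟨⟨0, hm⟩⟩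
    have hrΓ : ∀ i, aΓ i ≠ 0 := by
      intro i h
      have h1 := (hΓpos i).1
      rw [h] at h1
      simp at h1
    have hrΘ : ∀ i, aΘ i ≠ 0 := by
      intro i h
      have h1 := (hΘpos i).1
      rw [h] at h1
      simp at h1
    have hD : 0 < D := by
      rcases Nat.eq_zero_or_pos D with h0 | h0
      · exfalso
        subst h0
        have h1 : ‖cΓ ⟨0, hm⟩‖ = 0 := by
          have h2 : cΓ ⟨0, hm⟩ = 0 := Subsingleton.elim _ _
          rw [h2, norm_zero]
        rw [hΓbal] at h1
        exact hrΓ _ (norm_eq_zero.1 h1)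
      · exact h0
    haveI hne_D : Nonempty (Fin D) := ⟨⟨0, hD⟩⟩
    have hlam : ∀ (b b' : Fin d → ℝ), 0 < b ⟨d - 1, by omega⟩ → 0 < b' ⟨d - 1, by omega⟩ →
        ∀ lam : ℝ, b = lam • b' → 0 < lam := by
      intro b b' hb hb' lam hEq
      have h1 : b ⟨d - 1, by omega⟩ = lam * b' ⟨d - 1, by omega⟩ := by rw [hEq]; simp
      nlinarith
    set pΓ : Fin m → Prop := fun i => ∃ (k : Fin m) (μ : ℝ), 0 < μ ∧ aΘ k = μ • aΓ i with hpΓdef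
    set pΘ : Fin m → Prop := fun k => ∃ (i : Fin m) (μ : ℝ), 0 < μ ∧ aΘ k = μ • aΓ i with hpΘdef
    have uniqΘ : ∀ k k' i (μ μ' : ℝ), 0 < μ → 0 < μ' → aΘ k = μ • aΓ i →
        aΘ k' = μ' • aΓ i → k = k' := by
      intro k k' i μ μ' hμ hμ' h1 h2
      by_contra hne
      refine hΘred k k' hne (hrΘ k) (hrΘ k') (μ / μ') (div_pos hμ hμ') ?_
      rw [h1, h2, smul_smul]
      congr 1
      field_simp
    have uniqΓ : ∀ i i' k (μ μ' : ℝ), 0 < μ → 0 < μ' → aΘ k = μ • aΓ i →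
        aΘ k = μ' • aΓ i' → i = i' := by
      intro i i' k μ μ' hμ hμ' h1 h2
      by_contra hne
      refine hΓred i i' hne (hrΓ i) (hrΓ i') (μ' / μ) (div_pos hμ' hμ) ?_
      have h3 : μ • aΓ i = μ' • aΓ i' := by rw [← h1, ← h2]
      have h4 : aΓ i = (μ⁻¹ * μ') • aΓ i' := by
        rw [← smul_smul, ← h3, smul_smul, inv_mul_cancel₀ hμ.ne', one_smul]
      rw [div_eq_inv_mul]
      exact h4
    -- the bijection between matched indices
    let fΓ : {i // pΓ i} → {k // pΘ k} := fun x => ⟨x.2.choose, x.1, x.2.choose_spec⟩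
    let fΘ : {k // pΘ k} → {i // pΓ i} := fun x => ⟨x.2.choose, x.1, x.2.choose_spec⟩
    have hlr : ∀ x, fΘ (fΓ x) = x := by
      rintro ⟨i, h⟩
      apply Subtype.ext
      obtain ⟨μ, hμ, hEq⟩ := h.choose_spec
      have hspec := (show pΘ h.choose from ⟨i, h.choose_spec⟩).choose_spec
      obtain ⟨μ', hμ', hEq'⟩ := hspec
      exact uniqΓ _ _ _ μ' μ hμ' hμ hEq' hEq
    have hrl : ∀ x, fΓ (fΘ x) = x := by
      rintro ⟨k, h⟩
      apply Subtype.ext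
      obtain ⟨μ, hμ, hEq⟩ := h.choose_spec
      have hspec := (show pΓ h.choose from ⟨k, h.choose_spec⟩).choose_spec
      obtain ⟨μ', hμ', hEq'⟩ := hspec
      exact uniqΘ _ _ _ μ' μ hμ' hμ hEq' hEq
    let eM : {i // pΓ i} ≃ {k // pΘ k} := ⟨fΓ, fΘ, hlr, hrl⟩
    have hcard : Fintype.card {i // ¬ pΓ i} = Fintype.card {k // ¬ pΘ k} := by
      rw [Fintype.card_subtype_compl, Fintype.card_subtype_compl, Fintype.card_congr eM]
    let eC : {i // ¬ pΓ i} ≃ {k // ¬ pΘ k} := Fintype.equivOfCardEq hcard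
    let σ : Equiv.Perm (Fin m) :=
      (Equiv.sumCompl pΓ).symm.trans ((eM.sumCongr eC).trans (Equiv.sumCompl pΘ))
    have hσ1 : ∀ i (h : pΓ i), σ i = h.choose := by
      intro i h
      show (Equiv.sumCompl pΘ) ((eM.sumCongr eC) ((Equiv.sumCompl pΓ).symm i)) = _
      rw [Equiv.sumCompl_symm_apply_of_pos h]
      rfl
    have hσ2 : ∀ i (h : ¬ pΓ i), σ i = (eC ⟨i, h⟩ : Fin m) := by
      intro i h
      show (Equiv.sumCompl pΘ) ((eM.sumCongr eC) ((Equiv.sumCompl pΓ).symm i)) = _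
      rw [Equiv.sumCompl_symm_apply_of_neg h]
      rfl
    set E : ℝ := vSobSemi d D (fun x j =>
      (∑ i, cΘ i j * max (∑ l, aΘ i l * x l) 0) -
        ∑ i, cΓ i j * max (∑ l, aΓ i l * x l) 0) with hE
    have h2le : Real.sqrt 2 ≤ 2 := by
      nlinarith [Real.sq_sqrt (by norm_num : (0:ℝ) ≤ 2), Real.sqrt_nonneg 2]
    have h4eq : Real.sqrt 4 = 2 := by
      rw [show (4:ℝ) = 2 ^ 2 by norm_num, Real.sqrt_sq (by norm_num : (0:ℝ) ≤ 2)]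
    have hsE : 0 ≤ Real.sqrt E := Real.sqrt_nonneg E
    have hs2E : Real.sqrt (2 * E) ≤ 2 * Real.sqrt E := by
      rw [Real.sqrt_mul (by norm_num : (0:ℝ) ≤ 2)]
      exact mul_le_mul_of_nonneg_right h2le hsE
    have hs4E : Real.sqrt (2 * (2 * E)) ≤ 2 * Real.sqrt E := by
      rw [show 2 * (2 * E) = 4 * E by ring, Real.sqrt_mul (by norm_num : (0:ℝ) ≤ 4), h4eq]
    have key : ∀ i, (∀ l, |aΘ (σ i) l - aΓ i l| ≤ 4 * Real.sqrt E) ∧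
        (∀ j, |cΘ (σ i) j - cΓ i j| ≤ 4 * Real.sqrt E) := by
      intro i
      by_cases h : pΓ i
      · obtain ⟨μ, hμ, hEq⟩ : ∃ μ : ℝ, 0 < μ ∧ aΘ (σ i) = μ • aΓ i := by
          rw [hσ1 i h]
          exact h.choose_spec
        have hJ : ∀ j l, |cΘ (σ i) j * aΘ (σ i) l - cΓ i j * aΓ i l| ≤ 2 * E := by
          intro j l
          have hj := jump_bound hd0 hD aΘ cΘ aΓ cΓ hrΘ hrΓ (aΓ i) (hrΓ i)
            (fun k lam hk => hlam (aΘ k) (aΓ i) (hΘpos k).1 (hΓpos i).1 lam hk)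
            (fun k lam hk => hlam (aΓ k) (aΓ i) (hΓpos k).1 (hΓpos i).1 lam hk) j l
          have hS1 : (∑ k, if ∃ ν : ℝ, aΘ k = ν • aΓ i then cΘ k j * aΘ k l else 0)
              = cΘ (σ i) j * aΘ (σ i) l := by
            rw [Finset.sum_eq_single_of_mem (σ i) (Finset.mem_univ _)]
            · rw [if_pos ⟨μ, hEq⟩]
            · intro k _ hkne
              rw [if_neg]
              rintro ⟨ν, hν⟩
              have hνpos : 0 < ν := hlam (aΘ k) (aΓ i) (hΘpos k).1 (hΓpos i).1 ν hν
              exact hkne (uniqΘ k (σ i) i ν μ hνpos hμ hν hEq)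
          have hS2 : (∑ k, if ∃ ν : ℝ, aΓ k = ν • aΓ i then cΓ k j * aΓ k l else 0)
              = cΓ i j * aΓ i l := by
            rw [Finset.sum_eq_single_of_mem i (Finset.mem_univ _)]
            · rw [if_pos ⟨1, (one_smul ℝ (aΓ i)).symm⟩]
            · intro k _ hkne
              rw [if_neg]
              rintro ⟨ν, hν⟩
              have hνpos : 0 < ν := hlam (aΓ k) (aΓ i) (hΓpos k).1 (hΓpos i).1 ν hν
              exact hΓred k i hkne (hrΓ k) (hrΓ i) ν hνpos hν
          rw [hS1, hS2] at hj
          rw [← hE] at hj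
          exact hj
        have halg := alg hd0 hD (aΘ (σ i)) (aΓ i) (cΘ (σ i)) (cΓ i) (hΘbal (σ i))
          (hΓbal i) μ hμ hEq (2 * E) hJ
        refine ⟨fun l => le_trans (halg.1 l) ?_, fun j => le_trans (halg.2 j) ?_⟩
        · calc Real.sqrt (2 * E) ≤ 2 * Real.sqrt E := hs2E
            _ ≤ 4 * Real.sqrt E := by linarith
        · calc Real.sqrt (2 * (2 * E)) + Real.sqrt (2 * E)
              ≤ 2 * Real.sqrt E + 2 * Real.sqrt E := add_le_add hs4E hs2E
            _ = 4 * Real.sqrt E := by ring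
      · have hnΘ : ¬ pΘ (σ i) := by
          rw [hσ2 i h]
          exact (eC ⟨i, h⟩).2
        have hJΓ : ∀ j l, |cΓ i j * aΓ i l| ≤ 2 * E := by
          intro j l
          have hj := jump_bound hd0 hD aΘ cΘ aΓ cΓ hrΘ hrΓ (aΓ i) (hrΓ i)
            (fun k lam hk => hlam (aΘ k) (aΓ i) (hΘpos k).1 (hΓpos i).1 lam hk)
            (fun k lam hk => hlam (aΓ k) (aΓ i) (hΓpos k).1 (hΓpos i).1 lam hk) j l
          have hS1 : (∑ k, if ∃ ν : ℝ, aΘ k = ν • aΓ i then cΘ k j * aΘ k l else 0) = 0 := by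
            refine Finset.sum_eq_zero fun k _ => ?_
            rw [if_neg]
            rintro ⟨ν, hν⟩
            have hνpos : 0 < ν := hlam (aΘ k) (aΓ i) (hΘpos k).1 (hΓpos i).1 ν hν
            exact h ⟨k, ν, hνpos, hν⟩
          have hS2 : (∑ k, if ∃ ν : ℝ, aΓ k = ν • aΓ i then cΓ k j * aΓ k l else 0)
              = cΓ i j * aΓ i l := by
            rw [Finset.sum_eq_single_of_mem i (Finset.mem_univ _)]
            · rw [if_pos ⟨1, (one_smul ℝ (aΓ i)).symm⟩]
            · intro k _ hkne
              rw [if_neg]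
              rintro ⟨ν, hν⟩
              have hνpos : 0 < ν := hlam (aΓ k) (aΓ i) (hΓpos k).1 (hΓpos i).1 ν hν
              exact hΓred k i hkne (hrΓ k) (hrΓ i) ν hνpos hν
          rw [hS1, hS2, zero_sub, abs_neg] at hj
          rw [← hE] at hj
          exact hj
        have hJΘ : ∀ j l, |cΘ (σ i) j * aΘ (σ i) l| ≤ 2 * E := by
          intro j l
          have hj := jump_bound hd0 hD aΘ cΘ aΓ cΓ hrΘ hrΓ (aΘ (σ i)) (hrΘ (σ i))
            (fun k lam hk => hlam (aΘ k) (aΘ (σ i)) (hΘpos k).1 (hΘpos (σ i)).1 lam hk)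
            (fun k lam hk => hlam (aΓ k) (aΘ (σ i)) (hΓpos k).1 (hΘpos (σ i)).1 lam hk) j l
          have hS1 : (∑ k, if ∃ ν : ℝ, aΘ k = ν • aΘ (σ i) then cΘ k j * aΘ k l else 0)
              = cΘ (σ i) j * aΘ (σ i) l := by
            rw [Finset.sum_eq_single_of_mem (σ i) (Finset.mem_univ _)]
            · rw [if_pos ⟨1, (one_smul ℝ (aΘ (σ i))).symm⟩]
            · intro k _ hkne
              rw [if_neg]
              rintro ⟨ν, hν⟩
              have hνpos : 0 < ν := hlam (aΘ k) (aΘ (σ i)) (hΘpos k).1 (hΘpos (σ i)).1 ν hν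
              exact hΘred k (σ i) hkne (hrΘ k) (hrΘ (σ i)) ν hνpos hν
          have hS2 : (∑ k, if ∃ ν : ℝ, aΓ k = ν • aΘ (σ i) then cΓ k j * aΓ k l else 0) = 0 := by
            refine Finset.sum_eq_zero fun k _ => ?_
            rw [if_neg]
            rintro ⟨ν, hν⟩
            have hνpos : 0 < ν := hlam (aΓ k) (aΘ (σ i)) (hΓpos k).1 (hΘpos (σ i)).1 ν hν
            have h5 : aΘ (σ i) = ν⁻¹ • aΓ k := by
              rw [hν, smul_smul, inv_mul_cancel₀ hνpos.ne', one_smul]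
            exact hnΘ ⟨k, ν⁻¹, inv_pos.2 hνpos, h5⟩
          rw [hS1, hS2, sub_zero] at hj
          rw [← hE] at hj
          exact hj
        have hnΓ : ‖aΓ i‖ ≤ Real.sqrt (2 * E) :=
          small_norm hd0 hD (aΓ i) (cΓ i) (hΓbal i) (2 * E) hJΓ
        have hnT : ‖aΘ (σ i)‖ ≤ Real.sqrt (2 * E) :=
          small_norm hd0 hD (aΘ (σ i)) (cΘ (σ i)) (hΘbal (σ i)) (2 * E) hJΘ
        constructor
        · intro l
          calc |aΘ (σ i) l - aΓ i l| ≤ |aΘ (σ i) l| + |aΓ i l| := abs_sub _ _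
            _ ≤ ‖aΘ (σ i)‖ + ‖aΓ i‖ :=
                add_le_add (abs_le_pi_norm _ _) (abs_le_pi_norm _ _)
            _ ≤ Real.sqrt (2 * E) + Real.sqrt (2 * E) := add_le_add hnT hnΓ
            _ ≤ 2 * Real.sqrt E + 2 * Real.sqrt E := add_le_add hs2E hs2E
            _ = 4 * Real.sqrt E := by ring
        · intro j
          calc |cΘ (σ i) j - cΓ i j| ≤ |cΘ (σ i) j| + |cΓ i j| := abs_sub _ _
            _ ≤ ‖cΘ (σ i)‖ + ‖cΓ i‖ :=
                add_le_add (abs_le_pi_norm _ _) (abs_le_pi_norm _ _)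
            _ ≤ Real.sqrt (2 * E) + Real.sqrt (2 * E) := by
                rw [hΘbal (σ i), hΓbal i]
                exact add_le_add hnT hnΓ
            _ ≤ 2 * Real.sqrt E + 2 * Real.sqrt E := add_le_add hs2E hs2E
            _ = 4 * Real.sqrt E := by ring
    refine ⟨fun i => aΘ (σ i), fun i => cΘ (σ i), fun i => hΘbal (σ i), ?_,
      fun i => hΘpos (σ i), ?_, ?_⟩
    · intro i j hij h1 h2 μ hμ
      exact hΘred (σ i) (σ j) (fun hEq2 => hij (σ.injective hEq2)) h1 h2 μ hμ
    · intro x j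
      exact Equiv.sum_comp σ (fun k => cΘ k j * max (∑ l, aΘ k l * x l) 0)
    · exact max_le (ciSup_le fun i => ciSup_le fun l => (key i).1 l)
        (ciSup_le fun i => ciSup_le fun j => (key i).2 j)
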